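/- Let k : ℝ → ℝ be continuous, 2π-periodic, strictly positive, with ∫₀^{2π} k = 1. Let h : ℝ → ℝ be continuous and 2π-periodic with ∫₀^{2π} h = 0, and let ℋ be the 2π-periodic primitive of h normalized by ∫₀^{2π} ℋ(θ)/k(θ) dθ = 0. Then the dual-norm identity holds: sup{ ∫₀^{2π} h(θ)·v(θ) dθ : v is C¹ and 2π-periodic, ∫₀^{2π} v = 0, ∫₀^{2π} v'(θ)²·k(θ) dθ ≤ 1 } = (∫₀^{2π} ℋ(θ)²/k(θ) dθ)^{1/2}. -/

import Mathlib

noncomputable section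

open MeasureTheory

/-- The `2π`-periodic primitive of a zero-mean function `a`, normalized so that its
integral against `1/k` over a period vanishes. -/
lemma hasDerivAt_prim0 (f : ℝ → ℝ) (hf : Continuous f) (x : ℝ) :
    HasDerivAt (fun θ => ∫ u in (0:ℝ)..θ, f u) (f x) x :=
  intervalIntegral.integral_hasDerivAt_right (hf.intervalIntegrable _ _)
    hf.stronglyMeasurable.stronglyMeasurableAtFilter hf.continuousAt

def prim (k a : ℝ → ℝ) (θ : ℝ) : ℝ :=
  (∫ u in (0:ℝ)..θ, a u) -
    (∫ s in (0:ℝ)..(2 * Real.pi), (∫ u in (0:ℝ)..s, a u) / k s) /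
      (∫ s in (0:ℝ)..(2 * Real.pi), 1 / k s)

/-- Dual-norm identity for the weighted negative Sobolev norm on the circle:
the norm of a zero-mean `h` as a functional over the weighted gradient unit ball equals
the weighted `L²` norm of its normalized primitive. -/
theorem stmt19 (k h : ℝ → ℝ) (hkc : Continuous k)
    (hkper : Function.Periodic k (2 * Real.pi)) (hkpos : ∀ θ : ℝ, 0 < k θ)
    (hknorm : (∫ θ in (0:ℝ)..(2 * Real.pi), k θ) = 1)
    (hhc : Continuous h) (hhper : Function.Periodic h (2 * Real.pi))
    (hhmean : (∫ θ in (0:ℝ)..(2 * Real.pi), h θ) = 0) :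
    sSup {c : ℝ | ∃ v : ℝ → ℝ, ContDiff ℝ 1 v ∧ Function.Periodic v (2 * Real.pi) ∧
        (∫ θ in (0:ℝ)..(2 * Real.pi), v θ) = 0 ∧
        (∫ θ in (0:ℝ)..(2 * Real.pi), (deriv v θ) ^ 2 * k θ) ≤ 1 ∧
        c = ∫ θ in (0:ℝ)..(2 * Real.pi), h θ * v θ} =
      Real.sqrt (∫ θ in (0:ℝ)..(2 * Real.pi), (prim k h θ) ^ 2 / k θ) := by
  set T : ℝ := 2 * Real.pi with hTdef
  have hTpos : 0 < T := by positivity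
  set H0 : ℝ → ℝ := fun θ => ∫ u in (0:ℝ)..θ, h u with hH0def
  have hH0d : ∀ x, HasDerivAt H0 (h x) x := hasDerivAt_prim0 h hhc
  have hH0c : Continuous H0 :=
    Differentiable.continuous (fun x => (hH0d x).differentiableAt)
  have hk0 : ∀ θ, k θ ≠ 0 := fun θ => (hkpos θ).ne'
  set cst : ℝ := (∫ s in (0:ℝ)..T, H0 s / k s) / (∫ s in (0:ℝ)..T, 1 / k s) with hcstdef
  have hPeq : ∀ θ, prim k h θ = H0 θ - cst := fun θ => rfl
  have hPc : Continuous (fun θ => prim k h θ) := by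
    simp only [hPeq]; exact hH0c.sub continuous_const
  have hIk : 0 < ∫ s in (0:ℝ)..T, 1 / k s :=
    intervalIntegral.intervalIntegral_pos_of_pos
      ((continuous_const.div hkc hk0).intervalIntegrable _ _)
      (fun x => one_div_pos.mpr (hkpos x)) hTpos
  -- normalization: integral of prim/k vanishes
  have hPk0 : (∫ s in (0:ℝ)..T, prim k h s / k s) = 0 := by
    have e : ∀ s, prim k h s / k s = H0 s / k s - cst * (1 / k s) := by
      intro s; rw [hPeq, sub_div]; ring
    rw [intervalIntegral.integral_congr (fun s _ => e s)]
    rw [intervalIntegral.integral_sub (f := fun s => H0 s / k s)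
        (g := fun s => cst * (1 / k s))
        ((hH0c.div hkc hk0).intervalIntegrable _ _)
        ((continuous_const.mul (continuous_const.div hkc hk0)).intervalIntegrable _ _),
      intervalIntegral.integral_const_mul, hcstdef, div_mul_cancel₀ _ hIk.ne', sub_self]
  have hH0per : Function.Periodic H0 T := by
    intro θ
    have h1 : IntervalIntegrable h volume 0 θ := hhc.intervalIntegrable _ _
    have h2 : IntervalIntegrable h volume θ (θ + T) := hhc.intervalIntegrable _ _
    have h3 : (∫ u in θ..(θ + T), h u) = ∫ u in (0:ℝ)..(0 + T), h u :=
      hhper.intervalIntegral_add_eq θ 0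
    simp only [hH0def]
    rw [← intervalIntegral.integral_add_adjacent_intervals h1 h2, h3, zero_add, hhmean, add_zero]
  set A : ℝ := ∫ θ in (0:ℝ)..T, (prim k h θ) ^ 2 / k θ with hAdef
  have hA0 : 0 ≤ A :=
    intervalIntegral.integral_nonneg hTpos.le
      (fun u _ => div_nonneg (sq_nonneg _) (hkpos u).le)
  -- integration by parts
  have parts : ∀ v : ℝ → ℝ, ContDiff ℝ 1 v → Function.Periodic v T →
      (∫ θ in (0:ℝ)..T, h θ * v θ) = -∫ θ in (0:ℝ)..T, prim k h θ * deriv v θ := by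
    intro v hv hvper
    have hvd : Differentiable ℝ v := hv.differentiable one_ne_zero
    have hv'c : Continuous (deriv v) := (contDiff_one_iff_deriv.mp hv).2
    have h1 := intervalIntegral.integral_mul_deriv_eq_deriv_mul_of_hasDerivAt
      (u := H0) (v := v) (u' := h) (v' := deriv v) (a := (0:ℝ)) (b := T)
      hH0c.continuousOn hvd.continuous.continuousOn
      (fun x _ => hH0d x) (fun x _ => (hvd x).hasDerivAt)
      (hhc.intervalIntegrable _ _) (hv'c.intervalIntegrable _ _)
    have hH0T : H0 T = 0 := hhmean
    have hH00 : H0 0 = 0 := intervalIntegral.integral_same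
    have hdv : (∫ θ in (0:ℝ)..T, deriv v θ) = 0 := by
      rw [intervalIntegral.integral_deriv_eq_sub (fun x _ => hvd x)
        (hv'c.intervalIntegrable _ _)]
      have : v T = v 0 := by simpa using hvper 0
      rw [this, sub_self]
    have h2 : (∫ θ in (0:ℝ)..T, prim k h θ * deriv v θ)
        = (∫ θ in (0:ℝ)..T, H0 θ * deriv v θ)
          - cst * ∫ θ in (0:ℝ)..T, deriv v θ := by
      have e : ∀ θ, prim k h θ * deriv v θ = H0 θ * deriv v θ - cst * deriv v θ := by
        intro θ; rw [hPeq]; ring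
      rw [intervalIntegral.integral_congr (fun θ _ => e θ),
        intervalIntegral.integral_sub (f := fun θ => H0 θ * deriv v θ) (g := fun θ => cst * deriv v θ) ((hH0c.mul hv'c).intervalIntegrable _ _)
          ((continuous_const.mul hv'c).intervalIntegrable _ _),
        intervalIntegral.integral_const_mul]
    rw [h2, hdv, mul_zero, sub_zero]
    rw [hH0T, hH00] at h1
    simp only [zero_mul, sub_zero, zero_sub] at h1
    linarith [h1]
  -- upper bound
  have ub : ∀ c ∈ {c : ℝ | ∃ v : ℝ → ℝ, ContDiff ℝ 1 v ∧ Function.Periodic v T ∧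
      (∫ θ in (0:ℝ)..T, v θ) = 0 ∧
      (∫ θ in (0:ℝ)..T, (deriv v θ) ^ 2 * k θ) ≤ 1 ∧
      c = ∫ θ in (0:ℝ)..T, h θ * v θ}, c ≤ Real.sqrt A := by
    rintro c ⟨v, hv1, hv2, _hv3, hv4, rfl⟩
    have hv'c : Continuous (deriv v) := (contDiff_one_iff_deriv.mp hv1).2
    set B : ℝ := ∫ θ in (0:ℝ)..T, prim k h θ * deriv v θ with hBdef
    set C : ℝ := ∫ θ in (0:ℝ)..T, (deriv v θ) ^ 2 * k θ with hCdef
    have hC0 : 0 ≤ C :=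
      intervalIntegral.integral_nonneg hTpos.le
        (fun u _ => mul_nonneg (sq_nonneg _) (hkpos u).le)
    have key : ∀ t : ℝ, 0 ≤ C * (t * t) + (2 * B) * t + A := by
      intro t
      have pt : ∀ θ, (prim k h θ + t * (k θ * deriv v θ)) ^ 2 / k θ
          = ((deriv v θ) ^ 2 * k θ) * (t * t) + (prim k h θ * deriv v θ) * (2 * t)
            + (prim k h θ) ^ 2 / k θ := by
        intro θ
        have hk := hk0 θ
        field_simp
        ring
      have h0 : 0 ≤ ∫ θ in (0:ℝ)..T, (prim k h θ + t * (k θ * deriv v θ)) ^ 2 / k θ :=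
        intervalIntegral.integral_nonneg hTpos.le
          (fun u _ => div_nonneg (sq_nonneg _) (hkpos u).le)
      rw [intervalIntegral.integral_congr (fun θ _ => pt θ)] at h0
      have i1 : IntervalIntegrable (fun θ => (deriv v θ) ^ 2 * k θ * (t * t)) volume 0 T :=
        (((hv'c.pow 2).mul hkc).mul continuous_const).intervalIntegrable _ _
      have i2 : IntervalIntegrable (fun θ => prim k h θ * deriv v θ * (2 * t)) volume 0 T :=
        ((hPc.mul hv'c).mul continuous_const).intervalIntegrable _ _
      have i3 : IntervalIntegrable (fun θ => (prim k h θ) ^ 2 / k θ) volume 0 T :=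
        ((hPc.pow 2).div hkc hk0).intervalIntegrable _ _
      rw [intervalIntegral.integral_add
            (f := fun θ => (deriv v θ) ^ 2 * k θ * (t * t) + prim k h θ * deriv v θ * (2 * t))
            (g := fun θ => (prim k h θ) ^ 2 / k θ) (i1.add i2) i3,
          intervalIntegral.integral_add
            (f := fun θ => (deriv v θ) ^ 2 * k θ * (t * t))
            (g := fun θ => prim k h θ * deriv v θ * (2 * t)) i1 i2,
          intervalIntegral.integral_mul_const, intervalIntegral.integral_mul_const] at h0
      calc (0:ℝ) ≤ C * (t * t) + B * (2 * t) + A := h0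
        _ = C * (t * t) + (2 * B) * t + A := by ring
    have hd := discrim_le_zero key
    rw [discrim] at hd
    have hBB : B ^ 2 ≤ C * A := by nlinarith [hd]
    have h1 : B ^ 2 ≤ A := by nlinarith [hA0, hC0, hv4, hBB]
    rw [parts v hv1 hv2]
    calc -B ≤ |B| := neg_le_abs B
      _ = Real.sqrt (B ^ 2) := (Real.sqrt_sq_eq_abs B).symm
      _ ≤ Real.sqrt A := Real.sqrt_le_sqrt h1
  -- membership
  have mem : Real.sqrt A ∈ {c : ℝ | ∃ v : ℝ → ℝ, ContDiff ℝ 1 v ∧ Function.Periodic v T ∧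
      (∫ θ in (0:ℝ)..T, v θ) = 0 ∧
      (∫ θ in (0:ℝ)..T, (deriv v θ) ^ 2 * k θ) ≤ 1 ∧
      c = ∫ θ in (0:ℝ)..T, h θ * v θ} := by
    rcases eq_or_lt_of_le hA0 with hA | hA
    · refine ⟨fun _ => 0, contDiff_const, fun x => rfl, by simp, by simp, ?_⟩
      rw [← hA, Real.sqrt_zero]; simp
    · set Sq : ℝ := Real.sqrt A with hSqdef
      have hSq : 0 < Sq := Real.sqrt_pos.mpr hA
      have hs : Sq ^ 2 = A := Real.sq_sqrt hA0
      set g : ℝ → ℝ := fun u => -(prim k h u) / (k u * Sq) with hgdef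
      have hgc : Continuous g :=
        (hPc.neg).div (hkc.mul continuous_const) (fun x => (mul_pos (hkpos x) hSq).ne')
      have hVd : ∀ x, HasDerivAt (fun θ => ∫ u in (0:ℝ)..θ, g u) (g x) x :=
        hasDerivAt_prim0 g hgc
      have hVc : Continuous (fun θ => ∫ u in (0:ℝ)..θ, g u) :=
        Differentiable.continuous (fun x => (hVd x).differentiableAt)
      set d : ℝ := -(∫ θ in (0:ℝ)..T, ∫ u in (0:ℝ)..θ, g u) / T with hddef
      set v : ℝ → ℝ := fun θ => (∫ u in (0:ℝ)..θ, g u) + d with hvdef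
      have hv'd : ∀ x, HasDerivAt v (g x) x := fun x => (hVd x).add_const d
      have derivEq : deriv v = g := funext fun x => (hv'd x).deriv
      have hv1 : ContDiff ℝ 1 v :=
        contDiff_one_iff_deriv.mpr ⟨fun x => (hv'd x).differentiableAt,
          by rw [derivEq]; exact hgc⟩
      have hgper : Function.Periodic g T := by
        intro θ
        simp only [hgdef]
        have : prim k h (θ + T) = prim k h θ := by
          simp only [hPeq]; rw [hH0per θ]
        rw [this, hkper θ]
      have hgint0 : (∫ u in (0:ℝ)..T, g u) = 0 := by
        have e : ∀ u, g u = (-(1 / Sq)) * (prim k h u / k u) := by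
          intro u; simp only [hgdef]; field_simp
        rw [intervalIntegral.integral_congr (fun u _ => e u),
          intervalIntegral.integral_const_mul, hPk0, mul_zero]
      have hv2 : Function.Periodic v T := by
        intro θ
        simp only [hvdef]
        have h1 : IntervalIntegrable g volume 0 θ := hgc.intervalIntegrable _ _
        have h2 : IntervalIntegrable g volume θ (θ + T) := hgc.intervalIntegrable _ _
        rw [← intervalIntegral.integral_add_adjacent_intervals h1 h2,
          hgper.intervalIntegral_add_eq θ 0, zero_add, hgint0, add_zero]
      have hv3 : (∫ θ in (0:ℝ)..T, v θ) = 0 := by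
        simp only [hvdef]
        rw [intervalIntegral.integral_add (hVc.intervalIntegrable _ _)
          (intervalIntegrable_const), intervalIntegral.integral_const, hddef]
        simp only [smul_eq_mul, sub_zero]
        field_simp
        ring
      have hv4 : (∫ θ in (0:ℝ)..T, (deriv v θ) ^ 2 * k θ) ≤ 1 := by
        have e : ∀ θ, (deriv v θ) ^ 2 * k θ = ((prim k h θ) ^ 2 / k θ) * (1 / A) := by
          intro θ
          rw [derivEq]
          simp only [hgdef]
          rw [← hs]
          have hk := hk0 θ
          field_simp
        rw [intervalIntegral.integral_congr (fun θ _ => e θ),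
          intervalIntegral.integral_mul_const, ← hAdef, mul_one_div, div_self hA.ne']
      have hv5 : Real.sqrt A = ∫ θ in (0:ℝ)..T, h θ * v θ := by
        rw [parts v hv1 hv2]
        have e : ∀ θ, prim k h θ * deriv v θ = -(((prim k h θ) ^ 2 / k θ) * (1 / Sq)) := by
          intro θ
          rw [derivEq]
          simp only [hgdef]
          have hk := hk0 θ
          field_simp
        rw [intervalIntegral.integral_congr (fun θ _ => e θ),
          intervalIntegral.integral_neg, neg_neg,
          intervalIntegral.integral_mul_const, ← hAdef, mul_one_div]
        rw [eq_div_iff hSq.ne', ← sq]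
        exact hs
      exact ⟨v, hv1, hv2, hv3, hv4, hv5⟩
    -- note: c is a bound variable in set-builder; membership statement uses Real.sqrt A
  exact le_antisymm (csSup_le ⟨Real.sqrt A, mem⟩ ub) (le_csSup ⟨Real.sqrt A, ub⟩ mem)
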